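/- Let p, q ∈ ℂ with p ≠ 0 and q ≠ 0, let α, β ∈ ℂ satisfy α + β = p, αβ = −q and α ≠ β, and let x ∈ ℂ be a nonzero number with x² = −p²/q. Then for every natural number n ≥ 0, (α^{n+1} − β^{n+1})/(α − β) = pⁿ · x^{−n} · U_n(x/2), where U_n is the n-th Chebyshev polynomial of the second kind. -/

import Mathlib

theorem stmt_13 (p q x : ℂ) (hp : p ≠ 0) (hq : q ≠ 0) (hx : x ≠ 0)
    (hx2 : x ^ 2 = -(p ^ 2) / q) (α β : ℂ) (hsum : α + β = p) (hprod : α * β = -q)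
    (hne : α ≠ β) :
    ∀ n : ℕ,
      (α ^ (n + 1) - β ^ (n + 1)) / (α - β) =
        p ^ n * x⁻¹ ^ n * (Polynomial.Chebyshev.U ℂ n).eval (x / 2) := by
  have hab : α - β ≠ 0 := sub_ne_zero.mpr hne
  have hx2' : x ^ 2 * q = -(p ^ 2) := by
    field_simp at hx2; linear_combination hx2
  intro n
  induction n using Nat.twoStepInduction with
  | zero => simp [Polynomial.Chebyshev.U_zero, div_self hab]
  | one =>
      have h1 : (α ^ 2 - β ^ 2) / (α - β) = α + β := by
        rw [sq_sub_sq, mul_div_assoc, div_self hab, mul_one]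
      rw [show ((1:ℕ)+1) = 2 from rfl, h1]
      rw [show ((1:ℕ) : ℤ) = 1 by norm_num, Polynomial.Chebyshev.U_one]
      simp only [Polynomial.eval_mul, Polynomial.eval_ofNat, Polynomial.eval_X]
      field_simp
      linear_combination hsum
  | more n ih2 ih1 =>
      have hα : α ^ 2 = p * α + q := by linear_combination α * hsum - hprod
      have hβ : β ^ 2 = p * β + q := by linear_combination β * hsum - hprod
      have hnum : α ^ (n + 2 + 1) - β ^ (n + 2 + 1) =
          p * (α ^ (n + 1 + 1) - β ^ (n + 1 + 1)) + q * (α ^ (n + 1) - β ^ (n + 1)) := by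
        linear_combination (α ^ (n + 1)) * hα - (β ^ (n + 1)) * hβ
      have hU : Polynomial.Chebyshev.U ℂ ((n : ℤ) + 2) =
          2 * Polynomial.X * Polynomial.Chebyshev.U ℂ ((n : ℤ) + 1) -
            Polynomial.Chebyshev.U ℂ n := Polynomial.Chebyshev.U_add_two ℂ n
      rw [hnum, add_div, mul_div_assoc, mul_div_assoc, ih1, ih2]
      push_cast
      rw [hU]
      simp only [Polynomial.eval_sub, Polynomial.eval_mul, Polynomial.eval_ofNat,
        Polynomial.eval_X]
      set u0 := (Polynomial.Chebyshev.U ℂ (n : ℤ)).eval (x / 2) with hu0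
      set u1 := (Polynomial.Chebyshev.U ℂ ((n : ℤ) + 1)).eval (x / 2) with hu1
      have hxy : x * x⁻¹ = 1 := mul_inv_cancel₀ hx
      linear_combination (-(p ^ (n + 2) * x⁻¹ ^ (n + 1) * u1 + p ^ n * x⁻¹ ^ n * u0 * q * (1 + x * x⁻¹))) * hxy + (p ^ n * x⁻¹ ^ (n + 2) * u0) * hx2'
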